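/- For the Hénon–Heiles potential V(x₁,x₂) = ½(x₁²+x₂²) + x₁²x₂ − ⅓x₂³, denote by V_{x₁}, V_{x₂} its first partial derivatives and by V_{x₁x₁}, V_{x₁x₂}, V_{x₂x₂} its second partial derivatives. Then the identity G := 2(1/6 − V)(V_{x₁x₁}V_{x₂x₂} − V_{x₁x₂}²) + V_{x₁x₁}V_{x₂}² + V_{x₂x₂}V_{x₁}² − 2V_{x₁}V_{x₂}V_{x₁x₂} = 2(1/6 − V)(1 − x₁² − x₂²) holds for all (x₁,x₂) ∈ ℝ². In particular G > 0 at every (x₁,x₂) with V(x₁,x₂) < 1/6 and x₁² + x₂² < 1. -/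

import Mathlib

/-- The Hénon–Heiles potential. -/
noncomputable def hhV (x₁ x₂ : ℝ) : ℝ := (x₁ ^ 2 + x₂ ^ 2) / 2 + x₁ ^ 2 * x₂ - x₂ ^ 3 / 3

/-- First partial derivative of `hhV` in `x₁`. -/
noncomputable def hhV₁ (x₁ x₂ : ℝ) : ℝ := deriv (fun t => hhV t x₂) x₁

/-- First partial derivative of `hhV` in `x₂`. -/
noncomputable def hhV₂ (x₁ x₂ : ℝ) : ℝ := deriv (fun t => hhV x₁ t) x₂

/-- Second partial derivative `∂²V/∂x₁²`. -/
noncomputable def hhV₁₁ (x₁ x₂ : ℝ) : ℝ := deriv (fun t => hhV₁ t x₂) x₁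

/-- Second partial derivative `∂²V/∂x₁∂x₂`. -/
noncomputable def hhV₁₂ (x₁ x₂ : ℝ) : ℝ := deriv (fun t => hhV₁ x₁ t) x₂

/-- Second partial derivative `∂²V/∂x₂²`. -/
noncomputable def hhV₂₂ (x₁ x₂ : ℝ) : ℝ := deriv (fun t => hhV₂ x₁ t) x₂

/-- The convexity quantity `G` for the Hénon–Heiles potential. -/
noncomputable def hhG (x₁ x₂ : ℝ) : ℝ :=
  2 * (1 / 6 - hhV x₁ x₂) * (hhV₁₁ x₁ x₂ * hhV₂₂ x₁ x₂ - hhV₁₂ x₁ x₂ ^ 2)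
    + hhV₁₁ x₁ x₂ * hhV₂ x₁ x₂ ^ 2 + hhV₂₂ x₁ x₂ * hhV₁ x₁ x₂ ^ 2
    - 2 * hhV₁ x₁ x₂ * hhV₂ x₁ x₂ * hhV₁₂ x₁ x₂

/-- For the Hénon–Heiles potential, the convexity quantity `G` satisfies
`G = 2(1/6 − V)(1 − x₁² − x₂²)` everywhere; in particular `G > 0` wherever `V < 1/6`
and `x₁² + x₂² < 1`. -/

lemma hhV₁_eq (x₁ x₂ : ℝ) : hhV₁ x₁ x₂ = x₁ + 2 * x₁ * x₂ := by
  rw [hhV₁]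
  have h : HasDerivAt (fun t : ℝ => hhV t x₂) (x₁ + 2 * x₁ * x₂) x₁ := by
    have := (((hasDerivAt_pow 2 x₁).add_const (x₂ ^ 2)).div_const 2).add
      ((hasDerivAt_pow 2 x₁).mul_const x₂) |>.sub_const (x₂ ^ 3 / 3)
    exact this.congr_deriv (by push_cast; ring)
  exact h.deriv

lemma hhV₂_eq (x₁ x₂ : ℝ) : hhV₂ x₁ x₂ = x₂ + x₁ ^ 2 - x₂ ^ 2 := by
  rw [hhV₂]
  have h : HasDerivAt (fun t : ℝ => hhV x₁ t) (x₂ + x₁ ^ 2 - x₂ ^ 2) x₂ := by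
    have := ((((hasDerivAt_pow 2 x₂).const_add (x₁ ^ 2)).div_const 2).add
      ((hasDerivAt_id x₂).const_mul (x₁ ^ 2))).sub ((hasDerivAt_pow 3 x₂).div_const 3)
    exact this.congr_deriv (by push_cast; ring)
  exact h.deriv

lemma hhV₁₁_eq (x₁ x₂ : ℝ) : hhV₁₁ x₁ x₂ = 1 + 2 * x₂ := by
  rw [hhV₁₁]
  have h : HasDerivAt (fun t : ℝ => hhV₁ t x₂) (1 + 2 * x₂) x₁ := by
    have : (fun t : ℝ => hhV₁ t x₂) = fun t => t + 2 * t * x₂ := by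
      funext t; exact hhV₁_eq t x₂
    rw [this]
    have := (hasDerivAt_id x₁).add (((hasDerivAt_id x₁).const_mul 2).mul_const x₂)
    exact this.congr_deriv (by ring)
  exact h.deriv

lemma hhV₁₂_eq (x₁ x₂ : ℝ) : hhV₁₂ x₁ x₂ = 2 * x₁ := by
  rw [hhV₁₂]
  have h : HasDerivAt (fun t : ℝ => hhV₁ x₁ t) (2 * x₁) x₂ := by
    have : (fun t : ℝ => hhV₁ x₁ t) = fun t => x₁ + 2 * x₁ * t := by
      funext t; exact hhV₁_eq x₁ t
    rw [this]
    simpa using ((hasDerivAt_id x₂).const_mul (2 * x₁)).const_add x₁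
  exact h.deriv

lemma hhV₂₂_eq (x₁ x₂ : ℝ) : hhV₂₂ x₁ x₂ = 1 - 2 * x₂ := by
  rw [hhV₂₂]
  have h : HasDerivAt (fun t : ℝ => hhV₂ x₁ t) (1 - 2 * x₂) x₂ := by
    have : (fun t : ℝ => hhV₂ x₁ t) = fun t => t + x₁ ^ 2 - t ^ 2 := by
      funext t; exact hhV₂_eq x₁ t
    rw [this]
    have := ((hasDerivAt_id x₂).add_const (x₁ ^ 2)).sub (hasDerivAt_pow 2 x₂)
    exact this.congr_deriv (by push_cast; ring)
  exact h.deriv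

theorem henonHeiles_convexity_identity :
    (∀ x₁ x₂ : ℝ, hhG x₁ x₂ = 2 * (1 / 6 - hhV x₁ x₂) * (1 - x₁ ^ 2 - x₂ ^ 2)) ∧
    (∀ x₁ x₂ : ℝ, hhV x₁ x₂ < 1 / 6 → x₁ ^ 2 + x₂ ^ 2 < 1 → 0 < hhG x₁ x₂) := by
  have key : ∀ x₁ x₂ : ℝ, hhG x₁ x₂ = 2 * (1 / 6 - hhV x₁ x₂) * (1 - x₁ ^ 2 - x₂ ^ 2) := by
    intro x₁ x₂
    rw [hhG, hhV₁_eq, hhV₂_eq, hhV₁₁_eq, hhV₁₂_eq, hhV₂₂_eq, hhV]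
    ring
  refine ⟨key, fun x₁ x₂ hV hx => ?_⟩
  rw [key]
  have h1 : 0 < 1 / 6 - hhV x₁ x₂ := by linarith
  have h2 : 0 < 1 - x₁ ^ 2 - x₂ ^ 2 := by linarith
  positivity
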